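/- Normalization of l-factors: let A be an l-factor with root index i, L = {x ∈ ind(A) : x < i}, R = {x ∈ ind(A) : x > i}. Then modulo the congruence I: if L and R are both nonempty there exist l-factors A_L, A_R with ind(A_L)=L, ind(A_R)=R and A =_I (2^i ∘_2 A_R) ∘_1 A_L; if L = ∅ then A =_I 2^i ∘_2 A_R for some l-factor A_R with ind(A_R)=R; if R = ∅ then A =_I 2^i ∘_1 A_L for some l-factor A_L with ind(A_L)=L; and if ind(A) = {i} then A = 2^i. -/

import Mathlib

/-- Indexed terms of the language `L^I`: generators `2^k` and partial compositions. -/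
inductive Trm : Type
  | gen : ℕ → Trm
  | comp : Trm → ℕ → Trm → Trm
deriving DecidableEq

namespace Trm

/-- Arity `|A|`. -/
def arity : Trm → ℕ
  | gen _ => 2
  | comp A _ B => A.arity + B.arity - 1

/-- Set of indices occurring in a term. -/
def ind : Trm → Finset ℕ
  | gen k => {k}
  | comp A _ B => A.ind ∪ B.ind

/-- Root index. -/
def root : Trm → ℕ
  | gen k => k
  | comp A _ _ => A.root

/-- Number of occurrences of the generator. -/
def countGen : Trm → ℕ
  | gen _ => 1
  | comp A _ B => A.countGen + B.countGen

end Trm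

/-- The congruence `=_I` generated by (assoc1) and (assoc2). -/
inductive IEq : Trm → Trm → Prop
  | refl (A : Trm) : IEq A A
  | symm {A B} : IEq A B → IEq B A
  | trans {A B C} : IEq A B → IEq B C → IEq A C
  | congr {A A' B B'} (n : ℕ) : IEq A A' → IEq B B' →
      IEq (Trm.comp A n B) (Trm.comp A' n B')
  | assoc1 (A B C : Trm) (n m : ℕ) : n ≤ m → m < n + B.arity →
      IEq (Trm.comp (Trm.comp A n B) m C) (Trm.comp A n (Trm.comp B (m - n + 1) C))
  | assoc2 (A B C : Trm) (n m : ℕ) : n + B.arity ≤ m →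
      IEq (Trm.comp (Trm.comp A n B) m C) (Trm.comp (Trm.comp A (m - B.arity + 1) C) n B)

/-- Planar binary trees. -/
inductive BT : Type
  | leaf : BT
  | node : BT → BT → BT
deriving DecidableEq

namespace BT

/-- Number of leaves. -/
def leaves : BT → ℕ
  | leaf => 1
  | node l r => l.leaves + r.leaves

/-- Graft `S` at the `i`-th leaf (1-indexed) of a tree. -/
def graft : BT → ℕ → BT → BT
  | leaf, _, S => S
  | node l r, i, S =>
    if i ≤ l.leaves then node (l.graft i S) r else node l (r.graft (i - l.leaves) S)

end BT

/-- Evaluation `ε` of indexed terms to planar binary trees. -/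
def Trm.eval : Trm → BT
  | Trm.gen _ => BT.node BT.leaf BT.leaf
  | Trm.comp A i B => A.eval.graft i B.eval

/-- `l`-factors. -/
inductive LFactor : Trm → Prop
  | gen (k : ℕ) : LFactor (Trm.gen k)
  | step {A : Trm} (j : ℕ) : LFactor A → j ∉ A.ind →
      LFactor (Trm.comp A ((A.ind.filter (· < j)).card + 1) (Trm.gen j))

/-- Auxiliary for the head-insertion encoding: `done` is the list of already
inserted letters. -/
def hAux : Trm → List ℕ → List ℕ → Trm
  | A, _, [] => A
  | A, done, y :: rest =>
      hAux (Trm.comp A ((done.filter (· < y)).length + 1) (Trm.gen y)) (done ++ [y]) rest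

/-- Head-insertion encoding `h` (junk value on the empty word). -/
def hWord : List ℕ → Trm
  | [] => Trm.gen 0
  | x :: rest => hAux (Trm.gen x) [x] rest

/-- `u_a(x)`: number of letters to the left of `x` in `a` that are greater than `x`. -/
def uCount (a : List ℕ) (x : ℕ) : ℕ := ((a.takeWhile (· ≠ x)).filter (x < ·)).length

/-- Decreasing rearrangement of a word. -/
def sortDesc (a : List ℕ) : List ℕ := (a.mergeSort (· ≤ ·)).reverse

/-- Decreasing encoding `f` (junk value on the empty word). -/
def fWord (a : List ℕ) : Trm :=
  match sortDesc a with
  | [] => Trm.gen 0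
  | k :: rest => rest.foldl (fun A x => Trm.comp A (uCount a x + 1) (Trm.gen x)) (Trm.gen k)

/-- Standardization of a word of distinct integers. -/
def std (a : List ℕ) : List ℕ := a.map (fun x => (a.filter (· ≤ x)).length)

/-- Tonks' vertex map, splitting form `φ`. -/
def tonksPhi (a : List ℕ) : BT :=
  match ha : a.getLast? with
  | none => BT.leaf
  | some x =>
      BT.node (tonksPhi (std (a.filter (· < x)))) (tonksPhi (std (a.filter (x < ·))))
termination_by a.length
decreasing_by
  · have hx : x ∈ a := List.mem_of_mem_getLast? (Option.mem_def.mpr ha)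
    have : (a.filter (· < x)).length < a.length := by
      apply List.length_filter_lt_length_iff_exists.2
      exact ⟨x, hx, by simp⟩
    simp only [std, List.length_map, List.length_unattach]
    exact lt_of_lt_of_eq (List.length_filter_lt_length_iff_exists.2
      ⟨⟨x, hx⟩, List.mem_attach _ _, by simp⟩) List.length_attach
  · have hx : x ∈ a := List.mem_of_mem_getLast? (Option.mem_def.mpr ha)
    have : (a.filter (x < ·)).length < a.length := by
      apply List.length_filter_lt_length_iff_exists.2
      exact ⟨x, hx, by simp⟩
    simp only [std, List.length_map, List.length_unattach]
    exact lt_of_lt_of_eq (List.length_filter_lt_length_iff_exists.2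
      ⟨⟨x, hx⟩, List.mem_attach _ _, by simp⟩) List.length_attach

/-- Tonks' vertex map, head-grafting form `φ̂`. -/
def phiHat : List ℕ → BT
  | [] => BT.leaf
  | x :: rest => (phiHat (std rest)).graft x (BT.node BT.leaf BT.leaf)
termination_by a => a.length
decreasing_by
  simp [std]

/-- The Loday–Ronco map `ψ`. -/
def lodayPsi (a : List ℕ) : BT :=
  match hm : a.maximum with
  | none => BT.leaf
  | some m =>
      let i := a.idxOf m
      BT.node (lodayPsi (std (a.take i))) (lodayPsi (std (a.drop (i + 1))))
termination_by a.length
decreasing_by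
  · have hmem : m ∈ a := List.maximum_mem hm
    have hi : a.idxOf m < a.length := List.idxOf_lt_length_iff.2 hmem
    simp only [std, List.length_map, List.length_take]
    omega
  · have : a ≠ [] := by rintro rfl; simp [List.maximum] at hm
    have : 0 < a.length := List.length_pos_iff.2 this
    simp only [std, List.length_map, List.length_drop]
    omega

/-- Inverse of a permutation word on `{1,…,n}`. -/
def invWord (π : List ℕ) : List ℕ :=
  (List.range π.length).map (fun j => π.idxOf (j + 1) + 1)

/-- One Tamari (right rotation) step, at any subtree. -/
inductive TamariStep : BT → BT → Prop
  | rot (X Y Z : BT) : TamariStep (BT.node (BT.node X Y) Z) (BT.node X (BT.node Y Z))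
  | left {l l'} (r : BT) : TamariStep l l' → TamariStep (BT.node l r) (BT.node l' r)
  | right (l : BT) {r r'} : TamariStep r r' → TamariStep (BT.node l r) (BT.node l r')

/-- The Tamari order. -/
def TamariLE : BT → BT → Prop := Relation.ReflTransGen TamariStep

/-- The strict Tamari order. -/
def TamariLT : BT → BT → Prop := Relation.TransGen TamariStep

/-- One cover of the right weak Bruhat order on words. -/
inductive BruhatStep : List ℕ → List ℕ → Prop
  | swap (α : List ℕ) {u v : ℕ} (β : List ℕ) : u < v →
      BruhatStep (α ++ u :: v :: β) (α ++ v :: u :: β)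

/-- The right weak Bruhat order on words. -/
def BruhatLE : List ℕ → List ℕ → Prop := Relation.ReflTransGen BruhatStep

/-- Head-insertion index `k(a; σ)`. -/
def kIdx (a : ℕ) (σ : List ℕ) : ℕ := 1 + (σ.filter (· < a)).length


section AuxNormalization

namespace Trm

lemma ind_nonempty (A : Trm) : A.ind.Nonempty := by
  induction A with
  | gen k => exact ⟨k, by simp [ind]⟩
  | comp A n B ihA ihB =>
      obtain ⟨x, hx⟩ := ihA
      exact ⟨x, by simp [ind, hx]⟩

lemma root_mem_ind (A : Trm) : A.root ∈ A.ind := by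
  induction A with
  | gen k => simp [ind, root]
  | comp A n B ihA ihB =>
      simp only [ind, root, Finset.mem_union]
      exact Or.inl ihA

end Trm

lemma finset_union_singleton {s : Finset ℕ} {a : ℕ} : s ∪ {a} = insert a s := by
  ext x; simp [or_comm]

lemma lfactor_arity {A : Trm} (hA : LFactor A) : A.arity = A.ind.card + 1 := by
  induction hA with
  | gen k => simp [Trm.arity, Trm.ind]
  | step j hA hj ih =>
      rename_i A
      have hcard : (A.ind ∪ {j}).card = A.ind.card + 1 := by
        rw [finset_union_singleton, Finset.card_insert_of_notMem hj]
      simp only [Trm.arity, Trm.ind]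
      rw [hcard, ih]
      omega

lemma LFactor.step' {A : Trm} {j r : ℕ} (hA : LFactor A) (hj : j ∉ A.ind)
    (hr : r = (A.ind.filter (· < j)).card + 1) : LFactor (Trm.comp A r (Trm.gen j)) :=
  hr ▸ LFactor.step j hA hj

lemma ieq_push_left {X AL A : Trm} {j c : ℕ} (h : IEq A (Trm.comp X 1 AL))
    (hc : c + 1 < 1 + AL.arity) :
    IEq (Trm.comp A (c + 1) (Trm.gen j)) (Trm.comp X 1 (Trm.comp AL (c + 1) (Trm.gen j))) := by
  have h1 := IEq.congr (c + 1) h (IEq.refl (Trm.gen j))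
  have h2 := IEq.assoc1 X AL (Trm.gen j) 1 (c + 1) (by omega) hc
  rw [show c + 1 - 1 + 1 = c + 1 from by omega] at h2
  exact h1.trans h2

lemma ieq_push_right {X AR A : Trm} {j s : ℕ} (h : IEq A (Trm.comp X 2 AR))
    (hs : s + 2 < 2 + AR.arity) :
    IEq (Trm.comp A (s + 2) (Trm.gen j)) (Trm.comp X 2 (Trm.comp AR (s + 1) (Trm.gen j))) := by
  have h1 := IEq.congr (s + 2) h (IEq.refl (Trm.gen j))
  have h2 := IEq.assoc1 X AR (Trm.gen j) 2 (s + 2) (by omega) hs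
  rw [show s + 2 - 2 + 1 = s + 1 from by omega] at h2
  exact h1.trans h2

lemma ieq_jump {X AL A : Trm} {j d : ℕ} (hAL : LFactor AL) (h : IEq A (Trm.comp X 1 AL)) :
    IEq (Trm.comp A (AL.ind.card + d + 2) (Trm.gen j))
        (Trm.comp (Trm.comp X (d + 2) (Trm.gen j)) 1 AL) := by
  have h1 := IEq.congr (AL.ind.card + d + 2) h (IEq.refl (Trm.gen j))
  have h2 := IEq.assoc2 X AL (Trm.gen j) 1 (AL.ind.card + d + 2)
      (by rw [lfactor_arity hAL]; omega)
  rw [show AL.ind.card + d + 2 - AL.arity + 1 = d + 2 from by rw [lfactor_arity hAL]; omega] at h2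
  exact h1.trans h2

lemma lfactor_key {A : Trm} (hA : LFactor A) :
    A = Trm.gen A.root ∨
    (∃ AL : Trm, LFactor AL ∧ AL.ind = A.ind.filter (· < A.root) ∧
      A.ind.filter (A.root < ·) = ∅ ∧ IEq A (Trm.comp (Trm.gen A.root) 1 AL)) ∨
    (∃ AR : Trm, LFactor AR ∧ AR.ind = A.ind.filter (A.root < ·) ∧
      A.ind.filter (· < A.root) = ∅ ∧ IEq A (Trm.comp (Trm.gen A.root) 2 AR)) ∨
    (∃ AL AR : Trm, LFactor AL ∧ LFactor AR ∧ AL.ind = A.ind.filter (· < A.root) ∧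
      AR.ind = A.ind.filter (A.root < ·) ∧
      IEq A (Trm.comp (Trm.comp (Trm.gen A.root) 2 AR) 1 AL)) := by
  induction hA with
  | gen k => left; rfl
  | step j hA hj ih =>
      rename_i A
      rw [show ∀ n B, (Trm.comp A n B).root = A.root from fun _ _ => rfl]
      simp only [Trm.root, Trm.ind]
      have hji : j ≠ A.root := fun h => hj (h ▸ Trm.root_mem_ind A)
      rcases lt_or_gt_of_ne hji with hlt | hgt
      · -- j < A.root
        have hLeq : (A.ind ∪ {j}).filter (· < A.root) =
            insert j (A.ind.filter (· < A.root)) := by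
          ext x
          simp only [Finset.mem_filter, Finset.mem_union, Finset.mem_insert,
            Finset.mem_singleton]
          constructor
          · rintro ⟨h1 | h1, h2⟩
            · exact Or.inr ⟨h1, h2⟩
            · exact Or.inl h1
          · rintro (rfl | ⟨h1, h2⟩)
            · exact ⟨Or.inr rfl, hlt⟩
            · exact ⟨Or.inl h1, h2⟩
        have hReq : (A.ind ∪ {j}).filter (A.root < ·) = A.ind.filter (A.root < ·) := by
          ext x
          simp only [Finset.mem_filter, Finset.mem_union, Finset.mem_singleton]
          constructor
          · rintro ⟨h1 | h1, h2⟩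
            · exact ⟨h1, h2⟩
            · omega
          · rintro ⟨h1, h2⟩
            exact ⟨Or.inl h1, h2⟩
        have hsub : A.ind.filter (· < j) = (A.ind.filter (· < A.root)).filter (· < j) := by
          ext x
          simp only [Finset.mem_filter]
          constructor
          · rintro ⟨h1, h2⟩
            exact ⟨⟨h1, by omega⟩, h2⟩
          · rintro ⟨⟨h1, _⟩, h2⟩
            exact ⟨h1, h2⟩
        rcases ih with hgen | ⟨AL, hAL, hALind, hRe, heq⟩ | ⟨AR, hAR, hARind, hLe, heq⟩ |
            ⟨AL, AR, hAL, hAR, hALind, hARind, heq⟩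
        · -- A = gen root
          have hS : A.ind = {A.root} := by rw [hgen]; simp [Trm.ind, Trm.root]
          have hLe : A.ind.filter (· < A.root) = ∅ := by
            rw [hS]; rw [Finset.filter_singleton, if_neg (lt_irrefl _)]
          have hRe : A.ind.filter (A.root < ·) = ∅ := by
            rw [hS]; rw [Finset.filter_singleton, if_neg (lt_irrefl _)]
          have hr : A.ind.filter (· < j) = ∅ := by
            rw [hS]; rw [Finset.filter_singleton, if_neg (by omega)]
          right; left
          refine ⟨Trm.gen j, LFactor.gen j, ?_, ?_, ?_⟩
          · rw [hLeq, hLe]; rfl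
          · rw [hReq, hRe]
          · rw [hr]
            simp only [Finset.card_empty, Nat.zero_add]
            exact hgen ▸ IEq.refl _
        · -- second disjunct for A
          have hreq : A.ind.filter (· < j) = AL.ind.filter (· < j) := by
            rw [hsub, ← hALind]
          right; left
          have hjAL : j ∉ AL.ind := by
            intro h
            rw [hALind] at h
            exact hj (Finset.mem_filter.1 h).1
          refine ⟨Trm.comp AL ((AL.ind.filter (· < j)).card + 1) (Trm.gen j),
            LFactor.step j hAL hjAL, ?_, ?_, ?_⟩
          · show AL.ind ∪ {j} = _
            rw [hLeq, hALind, finset_union_singleton]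
          · rw [hReq, hRe]
          · rw [hreq]
            exact ieq_push_left heq (by
              rw [lfactor_arity hAL]
              have := Finset.card_filter_le AL.ind (· < j)
              omega)
        · -- third disjunct for A : left empty
          have hr : A.ind.filter (· < j) = ∅ := by
            rw [hsub, hLe, Finset.filter_empty]
          right; right; right
          refine ⟨Trm.gen j, AR, LFactor.gen j, hAR, ?_, ?_, ?_⟩
          · rw [hLeq, hLe]; rfl
          · rw [hReq, hARind]
          · rw [hr]
            simp only [Finset.card_empty, Nat.zero_add]
            exact IEq.congr 1 heq (IEq.refl _)
        · -- fourth disjunct for A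
          have hreq : A.ind.filter (· < j) = AL.ind.filter (· < j) := by
            rw [hsub, ← hALind]
          right; right; right
          have hjAL : j ∉ AL.ind := by
            intro h
            rw [hALind] at h
            exact hj (Finset.mem_filter.1 h).1
          refine ⟨Trm.comp AL ((AL.ind.filter (· < j)).card + 1) (Trm.gen j), AR,
            LFactor.step j hAL hjAL, hAR, ?_, ?_, ?_⟩
          · show AL.ind ∪ {j} = _
            rw [hLeq, hALind, finset_union_singleton]
          · rw [hReq, hARind]
          · rw [hreq]
            exact ieq_push_left heq (by
              rw [lfactor_arity hAL]
              have := Finset.card_filter_le AL.ind (· < j)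
              omega)
      · -- A.root < j
        have hLeq : (A.ind ∪ {j}).filter (· < A.root) = A.ind.filter (· < A.root) := by
          ext x
          simp only [Finset.mem_filter, Finset.mem_union, Finset.mem_singleton]
          constructor
          · rintro ⟨h1 | h1, h2⟩
            · exact ⟨h1, h2⟩
            · omega
          · rintro ⟨h1, h2⟩
            exact ⟨Or.inl h1, h2⟩
        have hReq : (A.ind ∪ {j}).filter (A.root < ·) =
            insert j (A.ind.filter (A.root < ·)) := by
          ext x
          simp only [Finset.mem_filter, Finset.mem_union, Finset.mem_insert,
            Finset.mem_singleton]
          constructor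
          · rintro ⟨h1 | h1, h2⟩
            · exact Or.inr ⟨h1, h2⟩
            · exact Or.inl h1
          · rintro (rfl | ⟨h1, h2⟩)
            · exact ⟨Or.inr rfl, hgt⟩
            · exact ⟨Or.inl h1, h2⟩
        have hdecomp : A.ind.filter (· < j) =
            (A.ind.filter (· < A.root)) ∪
              insert A.root ((A.ind.filter (A.root < ·)).filter (· < j)) := by
          ext x
          simp only [Finset.mem_filter, Finset.mem_union, Finset.mem_insert]
          constructor
          · rintro ⟨h1, h2⟩
            rcases lt_trichotomy x A.root with h | h | h
            · exact Or.inl ⟨h1, h⟩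
            · exact Or.inr (Or.inl h)
            · exact Or.inr (Or.inr ⟨⟨h1, h⟩, h2⟩)
          · rintro (⟨h1, h2⟩ | rfl | ⟨⟨h1, h2⟩, h3⟩)
            · exact ⟨h1, by omega⟩
            · exact ⟨Trm.root_mem_ind A, hgt⟩
            · exact ⟨h1, h3⟩
        have hcard : (A.ind.filter (· < j)).card =
            (A.ind.filter (· < A.root)).card +
              ((A.ind.filter (A.root < ·)).filter (· < j)).card + 1 := by
          rw [hdecomp, Finset.card_union_of_disjoint, Finset.card_insert_of_notMem]
          · omega
          · intro h
            have := (Finset.mem_filter.1 (Finset.mem_filter.1 h).1).2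
            omega
          · rw [Finset.disjoint_left]
            intro x hx hx'
            have h1 := (Finset.mem_filter.1 hx).2
            rcases Finset.mem_insert.1 hx' with rfl | h2
            · omega
            · have := (Finset.mem_filter.1 (Finset.mem_filter.1 h2).1).2
              omega
        rcases ih with hgen | ⟨AL, hAL, hALind, hRe, heq⟩ | ⟨AR, hAR, hARind, hLe, heq⟩ |
            ⟨AL, AR, hAL, hAR, hALind, hARind, heq⟩
        · -- A = gen root
          have hS : A.ind = {A.root} := by rw [hgen]; simp [Trm.ind, Trm.root]
          have hLe : A.ind.filter (· < A.root) = ∅ := by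
            rw [hS]; rw [Finset.filter_singleton, if_neg (lt_irrefl _)]
          have hRe : A.ind.filter (A.root < ·) = ∅ := by
            rw [hS]; rw [Finset.filter_singleton, if_neg (lt_irrefl _)]
          have hr : A.ind.filter (· < j) = {A.root} := by
            rw [hS]; rw [Finset.filter_singleton, if_pos hgt]
          right; right; left
          refine ⟨Trm.gen j, LFactor.gen j, ?_, ?_, ?_⟩
          · rw [hReq, hRe]; rfl
          · rw [hLeq, hLe]
          · rw [hr]
            simp only [Finset.card_singleton]
            exact IEq.congr 2 (hgen ▸ IEq.refl A) (IEq.refl _)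
        · -- second disjunct (AL, right empty) : jump over AL
          have hr : (A.ind.filter (· < j)).card + 1 = AL.ind.card + 0 + 2 := by
            rw [hcard, hRe, hALind, Finset.filter_empty]
            simp
          right; right; right
          refine ⟨AL, Trm.gen j, hAL, LFactor.gen j, ?_, ?_, ?_⟩
          · rw [hLeq, hALind]
          · rw [hReq, hRe]; rfl
          · rw [hr]
            exact ieq_jump (d := 0) hAL heq
        · -- third disjunct (AR, left empty)
          have hjAR : j ∉ AR.ind := by
            intro h
            rw [hARind] at h
            exact hj (Finset.mem_filter.1 h).1
          have hsAR : ((A.ind.filter (A.root < ·)).filter (· < j)).card =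
              (AR.ind.filter (· < j)).card := by rw [hARind]
          have hr : (A.ind.filter (· < j)).card + 1 = (AR.ind.filter (· < j)).card + 2 := by
            rw [hcard, hLe, hsAR]
            simp
          right; right; left
          refine ⟨Trm.comp AR ((AR.ind.filter (· < j)).card + 1) (Trm.gen j),
            LFactor.step j hAR hjAR, ?_, ?_, ?_⟩
          · show AR.ind ∪ {j} = _
            rw [hReq, hARind, finset_union_singleton]
          · rw [hLeq, hLe]
          · rw [hr]
            exact ieq_push_right heq (by
              rw [lfactor_arity hAR]
              have := Finset.card_filter_le AR.ind (· < j)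
              omega)
        · -- fourth disjunct
          have hjAR : j ∉ AR.ind := by
            intro h
            rw [hARind] at h
            exact hj (Finset.mem_filter.1 h).1
          have hsAR : ((A.ind.filter (A.root < ·)).filter (· < j)).card =
              (AR.ind.filter (· < j)).card := by rw [hARind]
          have hr : (A.ind.filter (· < j)).card + 1 =
              AL.ind.card + (AR.ind.filter (· < j)).card + 2 := by
            rw [hcard, hALind, hsAR]
          right; right; right
          refine ⟨AL, Trm.comp AR ((AR.ind.filter (· < j)).card + 1) (Trm.gen j),
            hAL, LFactor.step j hAR hjAR, ?_, ?_, ?_⟩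
          · rw [hLeq, hALind]
          · show AR.ind ∪ {j} = _
            rw [hReq, hARind, finset_union_singleton]
          · rw [hr]
            refine (ieq_jump hAL heq).trans (IEq.congr 1 ?_ (IEq.refl AL))
            exact ieq_push_right (IEq.refl _) (by
              rw [lfactor_arity hAR]
              have := Finset.card_filter_le AR.ind (· < j)
              omega)

end AuxNormalization

theorem lfactor_normalization (A : Trm) (hA : LFactor A) (i : ℕ) (hi : i = A.root)
    (L R : Finset ℕ) (hL : L = A.ind.filter (· < i)) (hR : R = A.ind.filter (i < ·)) :
    (L.Nonempty → R.Nonempty → ∃ AL AR : Trm, LFactor AL ∧ LFactor AR ∧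
        AL.ind = L ∧ AR.ind = R ∧
        IEq A (Trm.comp (Trm.comp (Trm.gen i) 2 AR) 1 AL)) ∧
    (L = ∅ → R.Nonempty → ∃ AR : Trm, LFactor AR ∧ AR.ind = R ∧
        IEq A (Trm.comp (Trm.gen i) 2 AR)) ∧
    (R = ∅ → L.Nonempty → ∃ AL : Trm, LFactor AL ∧ AL.ind = L ∧
        IEq A (Trm.comp (Trm.gen i) 1 AL)) ∧
    (A.ind = {i} → A = Trm.gen i) := by
  subst hi; subst hL; subst hR
  rcases lfactor_key hA with hgen | ⟨AL, h1, h2, h3, h4⟩ | ⟨AR, h1, h2, h3, h4⟩ |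
      ⟨AL, AR, h1, h1', h2, h2', h4⟩
  · have hS : A.ind = {A.root} := by rw [hgen]; simp [Trm.ind, Trm.root]
    have hLe : A.ind.filter (· < A.root) = ∅ := by
      rw [hS]; rw [Finset.filter_singleton, if_neg (lt_irrefl _)]
    refine ⟨?_, ?_, ?_, fun _ => hgen⟩
    · intro hLne _
      rw [hLe] at hLne
      exact absurd hLne (by simp)
    · intro _ hRne
      have hRe : A.ind.filter (A.root < ·) = ∅ := by
        rw [hS]; rw [Finset.filter_singleton, if_neg (lt_irrefl _)]
      rw [hRe] at hRne
      exact absurd hRne (by simp)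
    · intro _ hLne
      rw [hLe] at hLne
      exact absurd hLne (by simp)
  · refine ⟨?_, ?_, ?_, ?_⟩
    · intro _ hRne
      rw [h3] at hRne
      exact absurd hRne (by simp)
    · intro _ hRne
      rw [h3] at hRne
      exact absurd hRne (by simp)
    · intro _ _
      exact ⟨AL, h1, h2, h4⟩
    · intro hind
      exfalso
      have := Trm.ind_nonempty AL
      rw [h2, hind, Finset.filter_singleton, if_neg (lt_irrefl _)] at this
      exact absurd this (by simp)
  · refine ⟨?_, ?_, ?_, ?_⟩
    · intro hLne _
      rw [h3] at hLne
      exact absurd hLne (by simp)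
    · intro _ _
      exact ⟨AR, h1, h2, h4⟩
    · intro _ hLne
      rw [h3] at hLne
      exact absurd hLne (by simp)
    · intro hind
      exfalso
      have := Trm.ind_nonempty AR
      rw [h2, hind, Finset.filter_singleton, if_neg (lt_irrefl _)] at this
      exact absurd this (by simp)
  · refine ⟨?_, ?_, ?_, ?_⟩
    · intro _ _
      exact ⟨AL, AR, h1, h1', h2, h2', h4⟩
    · intro hL0 _
      exfalso
      have := Trm.ind_nonempty AL
      rw [h2, hL0] at this
      exact absurd this (by simp)
    · intro hR0 _
      exfalso
      have := Trm.ind_nonempty AR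
      rw [h2', hR0] at this
      exact absurd this (by simp)
    · intro hind
      exfalso
      have := Trm.ind_nonempty AL
      rw [h2, hind, Finset.filter_singleton, if_neg (lt_irrefl _)] at this
      exact absurd this (by simp)
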